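/- Let A be a Banach algebra satisfying the double-limit criterion for Arens regularity, i.e. for every μ ∈ A* and all bounded sequences (a_i), (ã_j) in A such that the iterated limits lim_i lim_j μ(a_i ã_j) and lim_j lim_i μ(a_i ã_j) both exist, these limits are equal. Let B be a finite-dimensional Banach algebra. Then every bounded bilinear form m : A × B → ℂ is biregular. -/
import Mathlib


open Filter Topology

set_option maxHeartbeats 1000000

/-- **Statement 5.** Let `A` be a Banach algebra satisfying the double-limit criterion for
Arens regularity and let `B` be a finite-dimensional Banach algebra. Then every bounded
bilinear form `m : A × B → ℂ` is biregular. -/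
theorem biregular_of_arens_regular_of_finiteDimensional
    {A B : Type}
    [NonUnitalNormedRing A] [NormedSpace ℂ A] [IsScalarTower ℂ A A] [SMulCommClass ℂ A A]
    [CompleteSpace A]
    [NonUnitalNormedRing B] [NormedSpace ℂ B] [IsScalarTower ℂ B B] [SMulCommClass ℂ B B]
    [CompleteSpace B] [FiniteDimensional ℂ B]
    (hA : ∀ (μ : A →L[ℂ] ℂ) (a a' : ℕ → A),
      (∃ C : ℝ, ∀ i, ‖a i‖ ≤ C) → (∃ C : ℝ, ∀ j, ‖a' j‖ ≤ C) →
      ∀ (g h : ℕ → ℂ) (L₁ L₂ : ℂ),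
        (∀ i, Tendsto (fun j => μ (a i * a' j)) atTop (𝓝 (g i))) →
        Tendsto g atTop (𝓝 L₁) →
        (∀ j, Tendsto (fun i => μ (a i * a' j)) atTop (𝓝 (h j))) →
        Tendsto h atTop (𝓝 L₂) → L₁ = L₂)
    (m : A →L[ℂ] B →L[ℂ] ℂ)
    (a a' : ℕ → A) (b b' : ℕ → B)
    (ha : ∀ i, ‖a i‖ ≤ 1) (ha' : ∀ j, ‖a' j‖ ≤ 1)
    (hb : ∀ i, ‖b i‖ ≤ 1) (hb' : ∀ j, ‖b' j‖ ≤ 1)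
    (g h : ℕ → ℂ) (L₁ L₂ : ℂ)
    (hg : ∀ i, Tendsto (fun j => m (a i * a' j) (b i * b' j)) atTop (𝓝 (g i)))
    (hgL : Tendsto g atTop (𝓝 L₁))
    (hh : ∀ j, Tendsto (fun i => m (a i * a' j) (b i * b' j)) atTop (𝓝 (h j)))
    (hhL : Tendsto h atTop (𝓝 L₂)) :
    L₁ = L₂ := by
  -- Step 1: compactness of the unit ball of B, extract convergent subsequences of b, b'.
  obtain ⟨β, hβmem, φ₀, hφ₀, hβ⟩ :=
    (isCompact_closedBall (0 : B) 1).tendsto_subseq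
      (x := b) (fun i => mem_closedBall_zero_iff.mpr (hb i))
  obtain ⟨β', hβ'mem, ψ₀, hψ₀, hβ'⟩ :=
    (isCompact_closedBall (0 : B) 1).tendsto_subseq
      (x := b') (fun j => mem_closedBall_zero_iff.mpr (hb' j))
  have hβ1 : ‖β‖ ≤ 1 := mem_closedBall_zero_iff.mp hβmem
  have hβ'1 : ‖β'‖ ≤ 1 := mem_closedBall_zero_iff.mp hβ'mem
  set μ : A →L[ℂ] ℂ := m.flip (β * β') with hμdef
  have haa' : ∀ i j, ‖a i * a' j‖ ≤ 1 := fun i j =>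
    (norm_mul_le _ _).trans (by nlinarith [ha i, ha' j, norm_nonneg (a i), norm_nonneg (a' j)])
  -- error functions
  set ε : ℕ → ℝ := fun i => ‖m‖ * ‖b (φ₀ i) - β‖ with hεdef
  set δ : ℕ → ℝ := fun j => ‖m‖ * ‖b' (ψ₀ j) - β'‖ with hδdef
  have hε0 : Tendsto ε atTop (𝓝 0) := by
    have : Tendsto (fun i => ‖b (φ₀ i) - β‖) atTop (𝓝 0) := by
      have := (hβ.sub_const β).norm
      simpa using this
    simpa using this.const_mul ‖m‖
  have hδ0 : Tendsto δ atTop (𝓝 0) := by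
    have : Tendsto (fun j => ‖b' (ψ₀ j) - β'‖) atTop (𝓝 0) := by
      have := (hβ'.sub_const β').norm
      simpa using this
    simpa using this.const_mul ‖m‖
  -- the key estimate
  have hest : ∀ i j,
      ‖m (a (φ₀ i) * a' (ψ₀ j)) (b (φ₀ i) * b' (ψ₀ j)) - μ (a (φ₀ i) * a' (ψ₀ j))‖
        ≤ ε i + δ j := by
    intro i j
    set x := a (φ₀ i) * a' (ψ₀ j) with hx
    have h1 : m x (b (φ₀ i) * b' (ψ₀ j)) - μ x = m x (b (φ₀ i) * b' (ψ₀ j) - β * β') := by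
      simp [hμdef, map_sub]
    rw [h1]
    have hdiff : b (φ₀ i) * b' (ψ₀ j) - β * β'
        = (b (φ₀ i) - β) * b' (ψ₀ j) + β * (b' (ψ₀ j) - β') := by noncomm_ring
    have h2a : ‖(b (φ₀ i) - β) * b' (ψ₀ j)‖ ≤ ‖b (φ₀ i) - β‖ := by
      have := norm_mul_le (b (φ₀ i) - β) (b' (ψ₀ j))
      nlinarith [hb' (ψ₀ j), norm_nonneg (b (φ₀ i) - β), norm_nonneg (b' (ψ₀ j))]
    have h2b : ‖β * (b' (ψ₀ j) - β')‖ ≤ ‖b' (ψ₀ j) - β'‖ := by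
      have := norm_mul_le β (b' (ψ₀ j) - β')
      nlinarith [norm_nonneg (b' (ψ₀ j) - β'), norm_nonneg β]
    have h2 : ‖b (φ₀ i) * b' (ψ₀ j) - β * β'‖ ≤ ‖b (φ₀ i) - β‖ + ‖b' (ψ₀ j) - β'‖ := by
      rw [hdiff]
      exact (norm_add_le _ _).trans (add_le_add h2a h2b)
    have h3 : ‖m x (b (φ₀ i) * b' (ψ₀ j) - β * β')‖
        ≤ (‖m‖ * ‖x‖) * ‖b (φ₀ i) * b' (ψ₀ j) - β * β'‖ :=
      ((m x).le_opNorm _).trans (mul_le_mul_of_nonneg_right (m.le_opNorm x) (norm_nonneg _))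
    have hx1 : ‖x‖ ≤ 1 := haa' _ _
    have hεδ : ε i + δ j = ‖m‖ * (‖b (φ₀ i) - β‖ + ‖b' (ψ₀ j) - β'‖) := by
      simp [hεdef, hδdef]; ring
    rw [hεδ]
    have h4 : (‖m‖ * ‖x‖) * ‖b (φ₀ i) * b' (ψ₀ j) - β * β'‖
        ≤ ‖m‖ * ‖b (φ₀ i) * b' (ψ₀ j) - β * β'‖ :=
      mul_le_mul_of_nonneg_right (mul_le_of_le_one_right m.opNorm_nonneg hx1) (norm_nonneg _)
    have h5 : ‖m‖ * ‖b (φ₀ i) * b' (ψ₀ j) - β * β'‖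
        ≤ ‖m‖ * (‖b (φ₀ i) - β‖ + ‖b' (ψ₀ j) - β'‖) :=
      mul_le_mul_of_nonneg_left h2 m.opNorm_nonneg
    linarith
  -- Step 2: extract a subsequence ψ₁ along which all the μ-entries converge in j.
  have hGbound : ∀ i j, μ (a (φ₀ i) * a' (ψ₀ j)) ∈ Metric.closedBall (0 : ℂ) ‖μ‖ := by
    intro i j
    rw [mem_closedBall_zero_iff]
    calc ‖μ (a (φ₀ i) * a' (ψ₀ j))‖ ≤ ‖μ‖ * ‖a (φ₀ i) * a' (ψ₀ j)‖ := μ.le_opNorm _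
      _ ≤ ‖μ‖ * 1 := mul_le_mul_of_nonneg_left (haa' _ _) μ.opNorm_nonneg
      _ = ‖μ‖ := mul_one _
  have hK : IsCompact (Set.univ.pi fun _ : ℕ => Metric.closedBall (0 : ℂ) ‖μ‖) :=
    isCompact_univ_pi fun _ => isCompact_closedBall 0 ‖μ‖
  obtain ⟨g', _, ψ₁, hψ₁, hg'pi⟩ :=
    hK.tendsto_subseq (x := fun j i => μ (a (φ₀ i) * a' (ψ₀ j)))
      (fun j => Set.mem_univ_pi.mpr fun i => hGbound i j)
  have hg' : ∀ i, Tendsto (fun j => μ (a (φ₀ i) * a' (ψ₀ (ψ₁ j)))) atTop (𝓝 (g' i)) :=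
    fun i => tendsto_pi_nhds.mp hg'pi i
  -- Step 3: extract a subsequence φ₁ along which all the μ-entries converge in i.
  obtain ⟨h', _, φ₁, hφ₁, hh'pi⟩ :=
    hK.tendsto_subseq (x := fun i j => μ (a (φ₀ i) * a' (ψ₀ (ψ₁ j))))
      (fun i => Set.mem_univ_pi.mpr fun j => hGbound i (ψ₁ j))
  have hh' : ∀ j, Tendsto (fun i => μ (a (φ₀ (φ₁ i)) * a' (ψ₀ (ψ₁ j)))) atTop (𝓝 (h' j)) :=
    fun j => tendsto_pi_nhds.mp hh'pi j
  -- Step 4: g' → L₁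
  have hgψ : ∀ i, Tendsto (fun j => m (a (φ₀ i) * a' (ψ₀ (ψ₁ j))) (b (φ₀ i) * b' (ψ₀ (ψ₁ j))))
      atTop (𝓝 (g (φ₀ i))) := fun i =>
    (hg (φ₀ i)).comp ((hψ₀.comp hψ₁).tendsto_atTop)
  have hg'close : ∀ i, ‖g' i - g (φ₀ i)‖ ≤ ε i := by
    intro i
    have h1 : Tendsto (fun j =>
        ‖m (a (φ₀ i) * a' (ψ₀ (ψ₁ j))) (b (φ₀ i) * b' (ψ₀ (ψ₁ j)))
          - μ (a (φ₀ i) * a' (ψ₀ (ψ₁ j)))‖) atTop (𝓝 ‖g (φ₀ i) - g' i‖) :=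
      ((hgψ i).sub (hg' i)).norm
    have h2 : Tendsto (fun j => ε i + δ (ψ₁ j)) atTop (𝓝 (ε i + 0)) :=
      tendsto_const_nhds.add (hδ0.comp hψ₁.tendsto_atTop)
    have h3 := le_of_tendsto_of_tendsto' h1 h2 (fun j => hest i (ψ₁ j))
    rw [norm_sub_rev] at h3
    linarith
  have hz : Tendsto (fun i => g' i - g (φ₀ i)) atTop (𝓝 0) :=
    squeeze_zero_norm hg'close hε0
  have hg'L : Tendsto g' atTop (𝓝 L₁) := by
    have := (hgL.comp hφ₀.tendsto_atTop).add hz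
    simpa using this
  -- Step 5: h' → L₂
  have hhφ : ∀ j, Tendsto (fun i =>
      m (a (φ₀ (φ₁ i)) * a' (ψ₀ (ψ₁ j))) (b (φ₀ (φ₁ i)) * b' (ψ₀ (ψ₁ j))))
      atTop (𝓝 (h (ψ₀ (ψ₁ j)))) := fun j =>
    (hh (ψ₀ (ψ₁ j))).comp ((hφ₀.comp hφ₁).tendsto_atTop)
  have hh'close : ∀ j, ‖h' j - h (ψ₀ (ψ₁ j))‖ ≤ δ (ψ₁ j) := by
    intro j
    have h1 : Tendsto (fun i =>
        ‖m (a (φ₀ (φ₁ i)) * a' (ψ₀ (ψ₁ j))) (b (φ₀ (φ₁ i)) * b' (ψ₀ (ψ₁ j)))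
          - μ (a (φ₀ (φ₁ i)) * a' (ψ₀ (ψ₁ j)))‖) atTop (𝓝 ‖h (ψ₀ (ψ₁ j)) - h' j‖) :=
      ((hhφ j).sub (hh' j)).norm
    have h2 : Tendsto (fun i => ε (φ₁ i) + δ (ψ₁ j)) atTop (𝓝 (0 + δ (ψ₁ j))) :=
      (hε0.comp hφ₁.tendsto_atTop).add tendsto_const_nhds
    have h3 := le_of_tendsto_of_tendsto' h1 h2 (fun i => hest (φ₁ i) (ψ₁ j))
    rw [norm_sub_rev] at h3
    linarith
  have hz' : Tendsto (fun j => h' j - h (ψ₀ (ψ₁ j))) atTop (𝓝 0) :=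
    squeeze_zero_norm hh'close (hδ0.comp hψ₁.tendsto_atTop)
  have hh'L : Tendsto h' atTop (𝓝 L₂) := by
    have := (hhL.comp ((hψ₀.comp hψ₁).tendsto_atTop)).add hz'
    simpa using this
  -- Step 6: apply the double-limit criterion
  exact hA μ (fun i => a (φ₀ (φ₁ i))) (fun j => a' (ψ₀ (ψ₁ j)))
    ⟨1, fun i => ha _⟩ ⟨1, fun j => ha' _⟩
    (fun i => g' (φ₁ i)) h' L₁ L₂
    (fun i => hg' (φ₁ i))
    (hg'L.comp hφ₁.tendsto_atTop)
    hh'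
    hh'L
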